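/- In the braid group Br_n, the elements a_{i,j} = σ_{j−1}⋯σ_{i+1}σ_i²σ_{i+1}⁻¹⋯σ_{j−1}⁻¹ satisfy, for i<j<k, the relation a_{i,j}a_{i,k}a_{j,k} = a_{i,k}a_{j,k}a_{i,j}. -/

import Mathlib

/-- The braid relations on the Artin generators `σ₁, …, σ_{n-1}` (generator `⟨k, _⟩ : Fin (n-1)`
represents `σ_{k+1}`): `σᵢσⱼ = σⱼσᵢ` for `|i - j| > 1` and `σᵢσᵢ₊₁σᵢ = σᵢ₊₁σᵢσᵢ₊₁`. -/
def braidRels (n : ℕ) : Set (FreeGroup (Fin (n - 1))) :=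
  {r | ∃ i j : Fin (n - 1),
      ((i : ℕ) + 1 < (j : ℕ) ∧
        r = FreeGroup.of i * FreeGroup.of j * (FreeGroup.of i)⁻¹ * (FreeGroup.of j)⁻¹) ∨
      ((j : ℕ) = (i : ℕ) + 1 ∧
        r = FreeGroup.of i * FreeGroup.of j * FreeGroup.of i *
              (FreeGroup.of j * FreeGroup.of i * FreeGroup.of j)⁻¹)}

/-- The braid group `Br_n`, presented by the Artin generators and braid relations. -/
abbrev Br (n : ℕ) := PresentedGroup (braidRels n)

/-- The Artin generator `σᵢ` of `Br n`, for `1 ≤ i ≤ n - 1` (junk value `1` otherwise). -/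
def σ {n : ℕ} (i : ℕ) : Br n :=
  if h : i - 1 < n - 1 then PresentedGroup.of ⟨i - 1, h⟩ else 1

/-- The pure braid generator `a_{i,j} = σ_{j-1} ⋯ σ_{i+1} σᵢ² σ_{i+1}⁻¹ ⋯ σ_{j-1}⁻¹`. -/
def braidA {n : ℕ} (i j : ℕ) : Br n :=
  (((List.range' (i + 1) (j - 1 - i)).reverse.map (σ (n := n))).prod) * (σ i) ^ 2 *
    (((List.range' (i + 1) (j - 1 - i)).reverse.map (σ (n := n))).prod)⁻¹

section abstract
variable {G : Type*} [Group G]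

theorem br_rel_one {n : ℕ} {r : FreeGroup (Fin (n-1))} (hr : r ∈ braidRels n) :
    PresentedGroup.mk (braidRels n) r = 1 :=
  (QuotientGroup.eq_one_iff r).mpr (Subgroup.subset_normalClosure hr)

theorem sigma_comm {n : ℕ} {a b : ℕ} (ha : 1 ≤ a) (hab : a + 1 < b) (hb : b ≤ n - 1) :
    σ (n := n) a * σ b = σ b * σ a := by
  have hfa : a - 1 < n - 1 := by omega
  have hfb : b - 1 < n - 1 := by omega
  have hrel : (FreeGroup.of (⟨a-1, hfa⟩ : Fin (n-1)) * FreeGroup.of (⟨b-1, hfb⟩ : Fin (n-1)) *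
      (FreeGroup.of (⟨a-1, hfa⟩ : Fin (n-1)))⁻¹ * (FreeGroup.of (⟨b-1, hfb⟩ : Fin (n-1)))⁻¹)
      ∈ braidRels n := ⟨⟨a-1, hfa⟩, ⟨b-1, hfb⟩, Or.inl ⟨by simp; omega, rfl⟩⟩
  have h1 := br_rel_one hrel
  simp only [map_mul, map_inv] at h1
  have h2 : (PresentedGroup.of (⟨a-1, hfa⟩ : Fin (n-1)) : Br n) * PresentedGroup.of ⟨b-1, hfb⟩ =
      PresentedGroup.of ⟨b-1, hfb⟩ * PresentedGroup.of ⟨a-1, hfa⟩ :=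
    commutatorElement_eq_one_iff_mul_comm.mp (by simpa [commutatorElement_def, PresentedGroup.of] using h1)
  simp only [σ, dif_pos hfa, dif_pos hfb]
  exact h2

theorem sigma_braid {n : ℕ} {a : ℕ} (ha : 1 ≤ a) (hb : a + 1 ≤ n - 1) :
    σ (n := n) a * σ (a+1) * σ a = σ (a+1) * σ a * σ (a+1) := by
  have hfa : a - 1 < n - 1 := by omega
  have hfb : a + 1 - 1 < n - 1 := by omega
  have hrel : (FreeGroup.of (⟨a-1, hfa⟩ : Fin (n-1)) * FreeGroup.of (⟨a, hfb⟩ : Fin (n-1)) *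
      FreeGroup.of (⟨a-1, hfa⟩ : Fin (n-1)) *
      (FreeGroup.of (⟨a, hfb⟩ : Fin (n-1)) * FreeGroup.of (⟨a-1, hfa⟩ : Fin (n-1)) *
        FreeGroup.of (⟨a, hfb⟩ : Fin (n-1)))⁻¹) ∈ braidRels n :=
    ⟨⟨a-1, hfa⟩, ⟨a, hfb⟩, Or.inr ⟨by simp; omega, rfl⟩⟩
  have h1 := br_rel_one hrel
  simp only [map_mul, map_inv] at h1
  have h2 := mul_eq_one_iff_eq_inv.mp h1
  rw [inv_inv] at h2
  simp only [σ, dif_pos hfa, dif_pos hfb]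
  simpa [PresentedGroup.of] using h2

theorem key_base (s t : G) (hst : s * t * s = t * s * t) :
    t * s ^ 2 * t * s ^ 2 = s ^ 2 * t * s ^ 2 * t := by
  have H1 : ∀ x : G, s * (t * (s * x)) = t * (s * (t * x)) := by
    intro x; have := congrArg (· * x) hst; simpa [mul_assoc] using this
  have H2 : ∀ x : G, t * (s * (t * x)) = s * (t * (s * x)) := fun x => (H1 x).symm
  have hst' : s * (t * s) = t * (s * t) := by simpa [mul_assoc] using hst
  calc t * s ^ 2 * t * s ^ 2
      = t * (s * (s * (t * (s * s)))) := by simp [pow_two, mul_assoc]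
    _ = t * (s * (t * (s * (t * s)))) := by rw [H1 s]
    _ = s * (t * (s * (s * (t * s)))) := by rw [H2 (s * (t * s))]
    _ = s * (t * (s * (t * (s * t)))) := by rw [hst']
    _ = s * (s * (t * (s * (s * t)))) := by rw [← H1 (s * t)]
    _ = s ^ 2 * t * s ^ 2 * t := by simp [pow_two, mul_assoc]

theorem key_step (s t a : G) (hst : s * t * s = t * s * t) (hat : a * t = t * a)
    (h : s * a * s * a = a * s * a * s) :
    t * (s * a * s⁻¹) * t * (s * a * s⁻¹) = (s * a * s⁻¹) * t * (s * a * s⁻¹) * t := by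
  have e1t : ∀ x : G, s⁻¹ * (t * (s * x)) = t * (s * (t⁻¹ * x)) := by
    intro x
    have h' := congrArg (fun y => s⁻¹ * y * (t⁻¹ * x)) hst
    simp only [mul_assoc] at h'
    simp only [inv_mul_cancel_left, mul_inv_cancel_left] at h'
    simpa [mul_assoc] using h'.symm
  have e2 : t⁻¹ * (s⁻¹ * t) = s * (t⁻¹ * s⁻¹) := by
    have h' := congrArg (fun y => s * y⁻¹ * t) hst
    simp only [mul_inv_rev, mul_assoc] at h'
    simp only [inv_mul_cancel_left, mul_inv_cancel_left, mul_inv_cancel, mul_one] at h'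
    simpa [mul_assoc] using h'
  have hatt : ∀ x : G, a * (t * x) = t * (a * x) := by
    intro x; have := congrArg (· * x) hat; simpa [mul_assoc] using this
  have hatit : ∀ x : G, t⁻¹ * (a * x) = a * (t⁻¹ * x) := by
    intro x
    have h' := congrArg (fun y => t⁻¹ * y * (t⁻¹ * x)) hat
    simp only [mul_assoc, inv_mul_cancel_left, mul_inv_cancel_left] at h'
    simpa [mul_assoc] using h'
  have ht : ∀ x : G, s * (a * (s * (a * x))) = a * (s * (a * (s * x))) := by
    intro x; have := congrArg (· * x) h; simpa [mul_assoc] using this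
  have H2 : ∀ x : G, t * (s * (t * x)) = s * (t * (s * x)) := by
    intro x; have := congrArg (· * x) hst.symm; simpa [mul_assoc] using this
  calc t * (s * a * s⁻¹) * t * (s * a * s⁻¹)
      = t * (s * (a * (s⁻¹ * (t * (s * (a * s⁻¹)))))) := by simp [mul_assoc]
    _ = t * (s * (a * (t * (s * (t⁻¹ * (a * s⁻¹)))))) := by rw [e1t]
    _ = t * (s * (t * (a * (s * (t⁻¹ * (a * s⁻¹)))))) := by rw [hatt]
    _ = t * (s * (t * (a * (s * (a * (t⁻¹ * s⁻¹)))))) := by rw [hatit]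
    _ = s * (t * (s * (a * (s * (a * (t⁻¹ * s⁻¹)))))) := by rw [H2]
    _ = s * (t * (a * (s * (a * (s * (t⁻¹ * s⁻¹)))))) := by rw [ht]
    _ = s * (t * (a * (s * (a * (t⁻¹ * (s⁻¹ * t)))))) := by rw [e2]
    _ = s * (t * (a * (s * (t⁻¹ * (a * (s⁻¹ * t)))))) := by rw [← hatit]
    _ = s * (a * (t * (s * (t⁻¹ * (a * (s⁻¹ * t)))))) := by rw [← hatt]
    _ = s * (a * (s⁻¹ * (t * (s * (a * (s⁻¹ * t)))))) := by rw [← e1t]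
    _ = (s * a * s⁻¹) * t * (s * a * s⁻¹) * t := by simp [mul_assoc]
end abstract

section braid
variable {n : ℕ}

theorem braidA_base (i : ℕ) : braidA (n := n) i (i + 1) = σ i ^ 2 := by
  simp [braidA]

theorem conj_step {G : Type*} [Group G] (s A B C : G) (h : Commute A s)
    (hrec : A * B * C = B * C * A) :
    A * (s * B * s⁻¹) * (s * C * s⁻¹) = (s * B * s⁻¹) * (s * C * s⁻¹) * A := by
  calc A * (s * B * s⁻¹) * (s * C * s⁻¹)
      = A * (s * (B * (s⁻¹ * (s * (C * s⁻¹))))) := by simp [mul_assoc]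
    _ = A * (s * (B * (C * s⁻¹))) := by rw [inv_mul_cancel_left]
    _ = s * (A * (B * (C * s⁻¹))) := by rw [← mul_assoc, h.eq, mul_assoc]
    _ = s * (A * B * C * s⁻¹) := by simp [mul_assoc]
    _ = s * (B * C * A * s⁻¹) := by rw [hrec]
    _ = s * (B * (C * (A * s⁻¹))) := by simp [mul_assoc]
    _ = s * (B * (C * (s⁻¹ * A))) := by rw [h.inv_right.eq]
    _ = (s * B * s⁻¹) * (s * C * s⁻¹) * A := by simp [mul_assoc]

theorem conj_base {G : Type*} [Group G] (s a : G) (h : s * a * s * a = a * s * a * s) :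
    a * (s * a * s⁻¹) * s ^ 2 = (s * a * s⁻¹) * s ^ 2 * a := by
  calc a * (s * a * s⁻¹) * s ^ 2
      = a * (s * (a * s)) := by simp [pow_two, mul_assoc]
    _ = s * (a * (s * a)) := by simpa [mul_assoc] using h.symm
    _ = (s * a * s⁻¹) * s ^ 2 * a := by simp [pow_two, mul_assoc]

theorem braidA_succ {i k : ℕ} (h : i + 1 ≤ k) :
    braidA (n := n) i (k + 1) = σ k * braidA i k * (σ k)⁻¹ := by
  have h1 : k + 1 - 1 - i = (k - 1 - i) + 1 := by omega
  have h2 : i + 1 + (k - 1 - i) = k := by omega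
  have h3 : List.range' (i+1) (k - 1 - i + 1) = List.range' (i+1) (k - 1 - i) ++ [k] := by
    rw [List.range'_1_concat, h2]
  simp only [braidA, h1, h3, List.reverse_append, List.reverse_cons, List.reverse_nil,
    List.nil_append, List.map_cons, List.map_append, List.prod_cons, List.map_nil,
    List.singleton_append, mul_inv_rev]
  simp [mul_assoc]

theorem comm_braidA {i j m : ℕ} (hi : 1 ≤ i) (hij : i < j) (hjm : j + 1 ≤ m)
    (hm : m ≤ n - 1) : σ (n := n) m * braidA i j = braidA i j * σ m := by
  induction j, hij using Nat.le_induction with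
  | base =>
      rw [braidA_base]
      have hc : Commute (σ (n := n) m) (σ i) := (sigma_comm hi (by omega : i + 1 < m) hm).symm
      exact (hc.pow_right 2).eq
  | succ j hij ih =>
      rw [braidA_succ (by omega : i + 1 ≤ j)]
      have hc : Commute (σ (n := n) m) (σ j) :=
        (sigma_comm (by omega : 1 ≤ j) (by omega : j + 1 < m) hm).symm
      have h2 : Commute (σ (n := n) m) (braidA i j) := ih (by omega)
      exact ((hc.mul_right h2).mul_right hc.inv_right).eq

theorem swap_braidA {i j : ℕ} (hi : 1 ≤ i) (hij : i < j) (hj : j ≤ n - 1) :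
    σ (n := n) j * braidA i j * σ j * braidA i j = braidA i j * σ j * braidA i j * σ j := by
  induction j, hij using Nat.le_induction with
  | base =>
      rw [braidA_base]
      exact key_base _ _ (sigma_braid hi hj)
  | succ j hij ih =>
      rw [braidA_succ (by omega : i + 1 ≤ j)]
      exact key_step _ _ _ (sigma_braid (by omega) hj)
        ((comm_braidA hi hij (le_refl (j+1)) hj).symm)
        (ih (by omega))
end braid

/-- Burau relation: `a_{i,j} a_{i,k} a_{j,k} = a_{i,k} a_{j,k} a_{i,j}` for `i < j < k`. -/
theorem burau_triple (n i j k : ℕ) (h1 : 1 ≤ i) (h2 : i < j) (h3 : j < k) (h4 : k ≤ n) :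
    braidA (n := n) i j * braidA i k * braidA j k =
      braidA i k * braidA j k * braidA i j := by

  induction k, h3 using Nat.le_induction with
  | base =>
      rw [braidA_base, braidA_succ (by omega : i + 1 ≤ j)]
      have hj : j ≤ n - 1 := by omega
      have hs := swap_braidA h1 h2 hj
      have := conj_base (σ (n := n) j) (braidA i j) hs
      calc braidA (n := n) i j * (σ j * braidA i j * (σ j)⁻¹) * σ j ^ 2
          = (σ j * braidA i j * (σ j)⁻¹) * σ j ^ 2 * braidA i j := this
        _ = σ j * braidA i j * (σ j)⁻¹ * σ j ^ 2 * braidA i j := by simp [mul_assoc]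
  | succ k h3 ih =>
      have hik : braidA (n := n) i (k+1) = σ k * braidA i k * (σ k)⁻¹ :=
        braidA_succ (by omega)
      have hjk : braidA (n := n) j (k+1) = σ k * braidA j k * (σ k)⁻¹ :=
        braidA_succ (by omega)
      have hc : Commute (braidA (n := n) i j) (σ k) :=
        (comm_braidA h1 h2 (by omega) (by omega)).symm
      have hrec := ih (by omega)
      rw [hik, hjk]
      exact conj_step (σ k) (braidA i j) (braidA i k) (braidA j k) hc hrec
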